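/- For every τ ∈ ℝ and ξ ∈ ℝ³, setting q₁ = ρτ² − (H·ξ)² and Q = ρ²τ⁴ − ρ(γp+|H|²)|ξ|²τ² + γp(H·ξ)²|ξ|², one has the 3×3 matrix identity [ Q·Id₃ + q₁·((γp+|H|²)(ξ⊗ξ) − (H·ξ)(ξ⊗H + H⊗ξ)) + (H·ξ)²·w²(ξ) ] · p₂(τ,ξ) = q₁·Q·Id₃, i.e. the bracketed matrix times p₂(τ,ξ) equals det p₂(τ,ξ) times the identity. -/
import Mathlib


open Matrix

noncomputable section

/-- Euclidean dot product on `ℝ³`. -/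
def dot3 (a b : Fin 3 → ℝ) : ℝ := a 0 * b 0 + a 1 * b 1 + a 2 * b 2

/-- Cross product on `ℝ³`. -/
def cross3 (a b : Fin 3 → ℝ) : Fin 3 → ℝ :=
  ![a 1 * b 2 - a 2 * b 1, a 2 * b 0 - a 0 * b 2, a 0 * b 1 - a 1 * b 0]

/-- The principal symbol `p₂(τ,ξ)` of the ideal MHD wave operator. -/
def p2 (ρ γ p τ : ℝ) (H ξ : Fin 3 → ℝ) : Matrix (Fin 3) (Fin 3) ℝ :=
  (ρ * τ ^ 2 - (dot3 H ξ) ^ 2) • (1 : Matrix (Fin 3) (Fin 3) ℝ)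
    - (γ * p + dot3 H H) • vecMulVec ξ ξ
    + (dot3 H ξ) • (vecMulVec ξ H + vecMulVec H ξ)

/-- `w²(ξ) = |H|²·(ξ⊗ξ) + |ξ|²·(H⊗H) − (H·ξ)·(H⊗ξ + ξ⊗H)`. -/
def w2 (H ξ : Fin 3 → ℝ) : Matrix (Fin 3) (Fin 3) ℝ :=
  (dot3 H H) • vecMulVec ξ ξ + (dot3 ξ ξ) • vecMulVec H H
    - (dot3 H ξ) • (vecMulVec H ξ + vecMulVec ξ H)

/-- With `q₁ = ρτ² − (H·ξ)²` and
`Q = ρ²τ⁴ − ρ(γp+|H|²)|ξ|²τ² + γp(H·ξ)²|ξ|²`, one has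
`[Q·Id₃ + q₁·((γp+|H|²)(ξ⊗ξ) − (H·ξ)(ξ⊗H + H⊗ξ)) + (H·ξ)²·w²(ξ)] · p₂(τ,ξ)
  = q₁·Q·Id₃`. -/
theorem stmt4 (ρ γ p : ℝ) (H : Fin 3 → ℝ) (hρ : 0 < ρ) (hγp : 0 < γ * p) :
    ∀ (τ : ℝ) (ξ : Fin 3 → ℝ),
      ((ρ ^ 2 * τ ^ 4 - ρ * (γ * p + dot3 H H) * dot3 ξ ξ * τ ^ 2
            + γ * p * (dot3 H ξ) ^ 2 * dot3 ξ ξ) • (1 : Matrix (Fin 3) (Fin 3) ℝ)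
          + (ρ * τ ^ 2 - (dot3 H ξ) ^ 2) •
              ((γ * p + dot3 H H) • vecMulVec ξ ξ
                - (dot3 H ξ) • (vecMulVec ξ H + vecMulVec H ξ))
          + (dot3 H ξ) ^ 2 • w2 H ξ) * p2 ρ γ p τ H ξ
        = ((ρ * τ ^ 2 - (dot3 H ξ) ^ 2)
            * (ρ ^ 2 * τ ^ 4 - ρ * (γ * p + dot3 H H) * dot3 ξ ξ * τ ^ 2
                + γ * p * (dot3 H ξ) ^ 2 * dot3 ξ ξ)) • (1 : Matrix (Fin 3) (Fin 3) ℝ) := by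
  intro τ ξ
  ext i j
  simp only [p2, w2, dot3, Matrix.mul_apply, Fin.sum_univ_three, Matrix.add_apply,
    Matrix.sub_apply, Matrix.smul_apply, Matrix.one_apply, Matrix.vecMulVec_apply,
    smul_eq_mul]
  fin_cases i <;> fin_cases j <;> simp <;> ring
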